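/- For the random unitary qubit generator Lρ = ∑_{k=1}^3 γ_k(σ_k ρ σ_k − ρ) with γ_k ≥ 0, the induced generator on the 6-dimensional tomographic probability vector decomposes as 𝕄 = M^{(x)} ⊕ M^{(y)} ⊕ M^{(z)}, where M^{(α)} = γ_α(σ_x − I₂) as a real 2×2 matrix, with γ_x = γ₂+γ₃, γ_y = γ₁+γ₃, γ_z = γ₁+γ₂; in particular each block satisfies the Kolmogorov conditions and 𝕄 generates a stochastic semigroup. -/

import Mathlib

open Matrix

/-- A real square matrix is column-stochastic. -/
def IsColStochastic {n : Type*} [Fintype n] (T : Matrix n n ℝ) : Prop :=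
  (∀ i j, 0 ≤ T i j) ∧ ∀ j, ∑ i, T i j = 1

/-- Kolmogorov conditions for a generator. -/
def IsKolmogorov {n : Type*} [Fintype n] [DecidableEq n] (M : Matrix n n ℝ) : Prop :=
  (∀ i j, i ≠ j → 0 ≤ M i j) ∧ ∀ j, ∑ i, M i j = 0

/-- The 2×2 Kolmogorov block `γ • (σx − I)`. -/
noncomputable def block (γ : ℝ) : Matrix (Fin 2) (Fin 2) ℝ := γ • !![-1, 1; 1, -1]

section Aux

variable {n : Type*} [Fintype n] [DecidableEq n]

lemma pow_entry_bound (A : Matrix n n ℝ) :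
    ∃ C : ℝ, 0 ≤ C ∧ ∀ (k : ℕ) i j, |(A ^ k) i j| ≤ C ^ k := by
  refine ⟨1 + ∑ l, ∑ j, |A l j|, by positivity, fun k => ?_⟩
  induction k with
  | zero =>
      intro i j
      simp only [pow_zero, Matrix.one_apply]
      split <;> simp
  | succ k ih =>
      intro i j
      have hC : ∀ j, ∑ l, |A l j| ≤ 1 + ∑ l, ∑ j, |A l j| := by
        intro j
        have h1 : ∑ l, |A l j| ≤ ∑ l, ∑ j', |A l j'| := by
          refine Finset.sum_le_sum fun l _ => ?_
          exact Finset.single_le_sum (f := fun j' => |A l j'|)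
            (fun _ _ => abs_nonneg _) (Finset.mem_univ j)
        linarith
      calc |(A ^ (k + 1)) i j| = |∑ l, (A ^ k) i l * A l j| := by
            rw [pow_succ, Matrix.mul_apply]
        _ ≤ ∑ l, |(A ^ k) i l * A l j| := Finset.abs_sum_le_sum_abs _ _
        _ ≤ ∑ l, (1 + ∑ l', ∑ j', |A l' j'|) ^ k * |A l j| := by
            refine Finset.sum_le_sum fun l _ => ?_
            rw [abs_mul]
            exact mul_le_mul_of_nonneg_right (ih i l) (abs_nonneg _)
        _ = (1 + ∑ l', ∑ j', |A l' j'|) ^ k * ∑ l, |A l j| := by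
            rw [Finset.mul_sum]
        _ ≤ (1 + ∑ l', ∑ j', |A l' j'|) ^ k * (1 + ∑ l', ∑ j', |A l' j'|) := by
            refine mul_le_mul_of_nonneg_left (hC j) (by positivity)
        _ = (1 + ∑ l', ∑ j', |A l' j'|) ^ (k + 1) := by rw [pow_succ]

lemma summable_exp_entry (A : Matrix n n ℝ) (i j : n) :
    Summable fun k : ℕ => ((Nat.factorial k : ℝ))⁻¹ * (A ^ k) i j := by
  obtain ⟨C, hC0, hC⟩ := pow_entry_bound A
  refine Summable.of_norm_bounded (Real.summable_pow_div_factorial C) fun k => ?_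
  rw [Real.norm_eq_abs, abs_mul, abs_inv, abs_of_nonneg (by positivity : (0:ℝ) ≤ (Nat.factorial k : ℝ)),
    div_eq_inv_mul]
  exact mul_le_mul_of_nonneg_left (hC k i j) (by positivity)

lemma summable_exp_series (A : Matrix n n ℝ) :
    Summable fun k : ℕ => ((Nat.factorial k : ℝ))⁻¹ • A ^ k := by
  rw [show (fun k : ℕ => ((Nat.factorial k : ℝ))⁻¹ • A ^ k) =
      (fun k : ℕ => ((Nat.factorial k : ℝ))⁻¹ • A ^ k : ℕ → n → n → ℝ) from rfl]
  refine Pi.summable.mpr fun i => Pi.summable.mpr fun j => ?_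
  exact summable_exp_entry A i j

lemma exp_entry (A : Matrix n n ℝ) (i j : n) :
    NormedSpace.exp A i j = ∑' k : ℕ, ((Nat.factorial k : ℝ))⁻¹ * (A ^ k) i j := by
  have h := summable_exp_series A
  rw [NormedSpace.exp_eq_tsum ℝ]
  show (∑' k : ℕ, ((Nat.factorial k : ℝ))⁻¹ • A ^ k) i j = _
  erw [tsum_apply h, tsum_apply (Pi.summable.mp h i)]
  rfl

lemma kolmogorov_exp_stochastic {M : Matrix n n ℝ} (hM : IsKolmogorov M)
    {t : ℝ} (ht : 0 ≤ t) : IsColStochastic (NormedSpace.exp (t • M)) := by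
  set A : Matrix n n ℝ := t • M with hA
  have hAoff : ∀ i j, i ≠ j → 0 ≤ A i j := fun i j hij =>
    mul_nonneg ht (hM.1 i j hij)
  have hAsum : ∀ j, ∑ i, A i j = 0 := by
    intro j
    simp only [hA, Matrix.smul_apply, smul_eq_mul, ← Finset.mul_sum, hM.2 j, mul_zero]
  set c : ℝ := ∑ i, |A i i| with hc
  have hc0 : 0 ≤ c := Finset.sum_nonneg fun i _ => abs_nonneg _
  set B : Matrix n n ℝ := A + c • (1 : Matrix n n ℝ) with hB
  have hBentry : ∀ i j, B i j = A i j + (if i = j then c else 0) := by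
    intro i j
    simp only [hB, Matrix.add_apply, Matrix.smul_apply, Matrix.one_apply, smul_eq_mul]
    split <;> simp
  have hB0 : ∀ i j, 0 ≤ B i j := by
    intro i j
    rw [hBentry]
    by_cases hij : i = j
    · subst hij
      rw [if_pos rfl]
      have : |A i i| ≤ c :=
        Finset.single_le_sum (f := fun i => |A i i|) (fun _ _ => abs_nonneg _)
          (Finset.mem_univ i)
      have := neg_abs_le (A i i)
      linarith
    · simpa [hij] using hAoff i j hij
  have hBcol : ∀ j, ∑ i, B i j = c := by
    intro j
    simp only [hBentry]
    rw [Finset.sum_add_distrib, hAsum j, Finset.sum_ite_eq' Finset.univ j fun _ => c]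
    simp
  have hBk0 : ∀ (k : ℕ) i j, 0 ≤ (B ^ k) i j := by
    intro k
    induction k with
    | zero => intro i j; simp only [pow_zero, Matrix.one_apply]; split <;> simp
    | succ k ih =>
        intro i j
        rw [pow_succ, Matrix.mul_apply]
        exact Finset.sum_nonneg fun l _ => mul_nonneg (ih i l) (hB0 l j)
  have hBkcol : ∀ (k : ℕ) j, ∑ i, (B ^ k) i j = c ^ k := by
    intro k
    induction k with
    | zero => intro j; simp [Matrix.one_apply, Finset.sum_ite_eq Finset.univ j]
    | succ k ih =>
        intro j
        simp only [pow_succ, Matrix.mul_apply]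
        rw [Finset.sum_comm]
        calc ∑ l, ∑ i, (B ^ k) i l * B l j
            = ∑ l, (∑ i, (B ^ k) i l) * B l j := by
              simp [Finset.sum_mul]
          _ = ∑ l, c ^ k * B l j := by simp only [ih]
          _ = c ^ k * c := by rw [← Finset.mul_sum, hBcol j]
  -- exp of the scalar part
  have hscalar : NormedSpace.exp ((-c) • (1 : Matrix n n ℝ))
      = Real.exp (-c) • (1 : Matrix n n ℝ) := by
    refine Matrix.ext fun i j => ?_
    rw [exp_entry]
    have hpow : ∀ k : ℕ, ((-c) • (1 : Matrix n n ℝ)) ^ k = (-c) ^ k • 1 := by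
      intro k; rw [smul_pow, one_pow]
    by_cases hij : i = j
    · subst hij
      have hterm : ∀ k : ℕ, ((Nat.factorial k : ℝ))⁻¹ * (((-c) • (1 : Matrix n n ℝ)) ^ k) i i
          = ((Nat.factorial k : ℝ))⁻¹ * (-c) ^ k := by
        intro k; rw [hpow]; simp [Matrix.one_apply]
      rw [tsum_congr hterm]
      have : (Real.exp (-c) • (1 : Matrix n n ℝ)) i i = Real.exp (-c) := by
        simp [Matrix.one_apply]
      rw [this, Real.exp_eq_exp_ℝ, NormedSpace.exp_eq_tsum ℝ]
      simp [smul_eq_mul]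
    · have hterm : ∀ k : ℕ, ((Nat.factorial k : ℝ))⁻¹ * (((-c) • (1 : Matrix n n ℝ)) ^ k) i j
          = 0 := by
        intro k; rw [hpow]; simp [Matrix.one_apply, hij]
      rw [tsum_congr hterm, tsum_zero]
      simp [Matrix.one_apply, hij]
  have hcomm : Commute B ((-c) • (1 : Matrix n n ℝ)) :=
    (Commute.one_right B).smul_right _
  have hAeq : A = B + (-c) • (1 : Matrix n n ℝ) := by
    rw [hB]; module
  have hexpA : NormedSpace.exp A = Real.exp (-c) • NormedSpace.exp B := by
    rw [hAeq, Matrix.exp_add_of_commute _ _ hcomm, hscalar, mul_smul_comm, mul_one]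
  constructor
  · intro i j
    rw [hexpA, Matrix.smul_apply, smul_eq_mul]
    refine mul_nonneg (Real.exp_nonneg _) ?_
    rw [exp_entry]
    exact tsum_nonneg fun k => mul_nonneg (by positivity) (hBk0 k i j)
  · intro j
    have : ∑ i, (Real.exp (-c) • NormedSpace.exp B) i j
        = Real.exp (-c) * ∑ i, NormedSpace.exp B i j := by
      simp [Matrix.smul_apply, Finset.mul_sum]
    rw [hexpA, this]
    have hcol : ∑ i, NormedSpace.exp B i j = Real.exp c := by
      have h1 : ∀ i, NormedSpace.exp B i j = ∑' k : ℕ, ((Nat.factorial k : ℝ))⁻¹ * (B ^ k) i j :=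
        fun i => exp_entry B i j
      simp only [h1]
      rw [← Summable.tsum_finsetSum (fun i _ => summable_exp_entry B i j)]
      have : ∀ k : ℕ, ∑ i, ((Nat.factorial k : ℝ))⁻¹ * (B ^ k) i j = ((Nat.factorial k : ℝ))⁻¹ * c ^ k := by
        intro k; rw [← Finset.mul_sum, hBkcol k j]
      rw [tsum_congr this, Real.exp_eq_exp_ℝ, NormedSpace.exp_eq_tsum ℝ]
      simp [smul_eq_mul]
    rw [hcol, ← Real.exp_add]
    simp

lemma block_kolmogorov {γ : ℝ} (hγ : 0 ≤ γ) : IsKolmogorov (block γ) := by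
  constructor
  · intro i j hij
    fin_cases i <;> fin_cases j <;> simp_all [block] <;> positivity
  · intro j
    fin_cases j <;> simp [block, Fin.sum_univ_two]

lemma blockDiagonal_kolmogorov {o : Type*} [Fintype o] [DecidableEq o]
    {f : o → Matrix n n ℝ} (h : ∀ α, IsKolmogorov (f α)) :
    IsKolmogorov (Matrix.blockDiagonal f) := by
  constructor
  · rintro ⟨i, α⟩ ⟨j, β⟩ hij
    rw [Matrix.blockDiagonal_apply]
    by_cases hab : α = β
    · subst hab
      have hijne : i ≠ j := fun hh => hij (by rw [hh])
      simpa using (h α).1 i j hijne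
    · simp [hab]
  · rintro ⟨j, α⟩
    rw [Fintype.sum_prod_type]
    have : ∀ i, ∑ β, Matrix.blockDiagonal f (i, β) (j, α) = f α i j := by
      intro i
      simp [Matrix.blockDiagonal_apply, Finset.sum_ite_eq Finset.univ α]
    simp only [this]
    exact (h α).2 j

end Aux

theorem random_unitary_generator_stochastic (γ₁ γ₂ γ₃ : ℝ)
    (hγ₁ : 0 ≤ γ₁) (hγ₂ : 0 ≤ γ₂) (hγ₃ : 0 ≤ γ₃)
    (πx πy πz : ℝ) (hπx : 0 < πx) (hπy : 0 < πy) (hπz : 0 < πz)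
    (γv : Fin 3 → ℝ) (hγv : γv = ![γ₂ + γ₃, γ₁ + γ₃, γ₁ + γ₂])
    (𝕄 : Matrix (Fin 2 × Fin 3) (Fin 2 × Fin 3) ℝ)
    (h𝕄 : 𝕄 = Matrix.blockDiagonal fun α : Fin 3 => block (γv α))
    -- the tomographic coordinates `P` built from a Bloch trajectory `r`
    (r : ℝ → Fin 3 → ℝ)
    (hr : ∀ t, ∀ α : Fin 3, HasDerivAt (fun s => r s α) (-2 * γv α * r t α) t)
    (P : ℝ → Fin 2 × Fin 3 → ℝ)
    (hP : ∀ t α, P t (0, α) = ![πx, πy, πz] α * (1 + r t α) / 2 ∧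
                 P t (1, α) = ![πx, πy, πz] α * (1 - r t α) / 2) :
    (∀ t i, HasDerivAt (fun s => P s i) (𝕄.mulVec (P t) i) t) ∧
    (∀ α : Fin 3, IsKolmogorov (block (γv α))) ∧
    IsKolmogorov 𝕄 ∧
    (∀ t : ℝ, 0 ≤ t → IsColStochastic (NormedSpace.exp (t • 𝕄))) := by
  have hγv0 : ∀ α, 0 ≤ γv α := by
    intro α
    fin_cases α <;> simp [hγv] <;> linarith
  have hmul : ∀ t (α : Fin 3) (i : Fin 2),
      𝕄.mulVec (P t) (i, α) = ∑ j : Fin 2, block (γv α) i j * P t (j, α) := by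
    intro t α i
    rw [h𝕄, Matrix.mulVec, dotProduct, Fintype.sum_prod_type]
    refine Finset.sum_congr rfl fun j _ => ?_
    simp [Matrix.blockDiagonal_apply, Finset.sum_ite_eq Finset.univ α]
  refine ⟨?_, fun α => block_kolmogorov (hγv0 α), ?_, ?_⟩
  · rintro t ⟨i, α⟩
    fin_cases i
    · show HasDerivAt (fun s => P s ((0 : Fin 2), α)) (𝕄.mulVec (P t) ((0 : Fin 2), α)) t
      have hval := hmul t α 0
      have hfun : (fun s => P s (0, α)) = fun s => ![πx, πy, πz] α * (1 + r s α) / 2 :=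
        funext fun s => (hP s α).1
      have hd : HasDerivAt (fun s => ![πx, πy, πz] α * (1 + r s α) / 2)
          (![πx, πy, πz] α * (-2 * γv α * r t α) / 2) t :=
        (((hr t α).const_add 1).const_mul _).div_const 2
      rw [hfun]
      convert hd using 1
      rw [hval, Fin.sum_univ_two, (hP t α).1, (hP t α).2]
      simp only [block, Matrix.smul_apply, smul_eq_mul]
      norm_num [Matrix.cons_val_zero, Matrix.cons_val_one]
      ring
    · show HasDerivAt (fun s => P s ((1 : Fin 2), α)) (𝕄.mulVec (P t) ((1 : Fin 2), α)) t
      have hval := hmul t α 1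
      have hfun : (fun s => P s (1, α)) = fun s => ![πx, πy, πz] α * (1 - r s α) / 2 :=
        funext fun s => (hP s α).2
      have hd : HasDerivAt (fun s => ![πx, πy, πz] α * (1 - r s α) / 2)
          (![πx, πy, πz] α * (-(-2 * γv α * r t α)) / 2) t :=
        ((((hr t α).neg).const_add 1).const_mul _).div_const 2
      rw [hfun]
      convert hd using 1
      rw [hval, Fin.sum_univ_two, (hP t α).1, (hP t α).2]
      simp only [block, Matrix.smul_apply, smul_eq_mul]
      norm_num [Matrix.cons_val_zero, Matrix.cons_val_one]
      ring
  · rw [h𝕄]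
    exact blockDiagonal_kolmogorov fun α => block_kolmogorov (hγv0 α)
  · intro t ht
    have : IsKolmogorov 𝕄 := by
      rw [h𝕄]
      exact blockDiagonal_kolmogorov fun α => block_kolmogorov (hγv0 α)
    exact kolmogorov_exp_stochastic this ht
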